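/- If Γ is a minimally connected prime graph that is not a minimal prime graph, then Γ is isomorphic to a complete bridge graph B_{m,n} for some m ≥ n with either m ≥ n > 1, or m ∈ {1,2} and n = 1. -/

import Mathlib

open SimpleGraph

def bridgeAdj (m n : ℕ) : (Fin m ⊕ Fin n) → (Fin m ⊕ Fin n) → Prop
  | Sum.inl i, Sum.inl j => i ≠ j
  | Sum.inr i, Sum.inr j => i ≠ j
  | Sum.inl i, Sum.inr j => i.val = 0 ∧ j.val = 0
  | Sum.inr i, Sum.inl j => i.val = 0 ∧ j.val = 0

/-- The complete bridge graph `B_{m,n}`: two disjoint complete graphs on `m` and `n`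
vertices respectively, joined by exactly one edge (the bridge). -/
def completeBridgeGraph (m n : ℕ) : SimpleGraph (Fin m ⊕ Fin n) where
  Adj := bridgeAdj m n
  symm := by
    constructor; rintro (a | a) (b | b) h <;> simp_all [bridgeAdj] <;> tauto
  loopless := by
    constructor; rintro (a | a) h <;> simp_all [bridgeAdj]

/-- A minimally connected prime graph (MCPG). -/
def IsMCPG {V : Type} [Fintype V] (Γ : SimpleGraph V) : Prop :=
  2 ≤ Fintype.card V ∧ Γ.Connected ∧ Γᶜ.CliqueFree 3 ∧ Γᶜ.Colorable 3 ∧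
    ∀ e ∈ Γ.edgeSet,
      ¬((Γ.deleteEdges {e}).Connected ∧ (Γ.deleteEdges {e})ᶜ.CliqueFree 3 ∧
        (Γ.deleteEdges {e})ᶜ.Colorable 3)

/-- A minimal prime graph (MPG). -/
def IsMPG {V : Type} [Fintype V] (Γ : SimpleGraph V) : Prop :=
  2 ≤ Fintype.card V ∧ Γ.Connected ∧ Γᶜ.CliqueFree 3 ∧ Γᶜ.Colorable 3 ∧
    ∀ e ∈ Γ.edgeSet,
      ¬((Γ.deleteEdges {e})ᶜ.CliqueFree 3 ∧ (Γ.deleteEdges {e})ᶜ.Colorable 3)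

/-- A possibly disconnected minimal prime graph (PDMPG). -/
def IsPDMPG {V : Type} [Fintype V] (Γ : SimpleGraph V) : Prop :=
  Γᶜ.CliqueFree 3 ∧ Γᶜ.Colorable 3 ∧
    ∀ e ∈ Γ.edgeSet,
      ¬((Γ.deleteEdges {e})ᶜ.CliqueFree 3 ∧ (Γ.deleteEdges {e})ᶜ.Colorable 3)

lemma iso_lemma {V : Type} (Γ : SimpleGraph V) (P : V → Prop)
    (a b : V) (ha : P a) (hb : ¬ P b)
    (hAdj : ∀ x y, Γ.Adj x y ↔ ((x ≠ y ∧ ((P x ∧ P y) ∨ (¬P x ∧ ¬P y))) ∨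
      (x = a ∧ y = b) ∨ (x = b ∧ y = a)))
    (m n : ℕ) (e₁ : {x // P x} ≃ Fin m) (e₂ : {x // ¬ P x} ≃ Fin n) :
    Nonempty (Γ ≃g completeBridgeGraph m n) := by
  classical
  have hm : 0 < m := (e₁ ⟨a, ha⟩).pos
  have hn : 0 < n := (e₂ ⟨b, hb⟩).pos
  set f₁ : {x // P x} ≃ Fin m := e₁.trans (Equiv.swap (e₁ ⟨a, ha⟩) ⟨0, hm⟩) with hf₁
  set f₂ : {x // ¬ P x} ≃ Fin n := e₂.trans (Equiv.swap (e₂ ⟨b, hb⟩) ⟨0, hn⟩) with hf₂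
  have hfa : f₁ ⟨a, ha⟩ = ⟨0, hm⟩ := by simp [hf₁]
  have hfb : f₂ ⟨b, hb⟩ = ⟨0, hn⟩ := by simp [hf₂]
  have key₁ : ∀ (x : V) (hx : P x), (f₁ ⟨x, hx⟩).val = 0 ↔ x = a := by
    intro x hx
    constructor
    · intro h
      have : f₁ ⟨x, hx⟩ = f₁ ⟨a, ha⟩ := by rw [hfa]; exact Fin.ext h
      simpa [Subtype.ext_iff] using f₁.injective this
    · rintro rfl; rw [hfa]
  have key₂ : ∀ (x : V) (hx : ¬ P x), (f₂ ⟨x, hx⟩).val = 0 ↔ x = b := by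
    intro x hx
    constructor
    · intro h
      have : f₂ ⟨x, hx⟩ = f₂ ⟨b, hb⟩ := by rw [hfb]; exact Fin.ext h
      simpa [Subtype.ext_iff] using f₂.injective this
    · rintro rfl; rw [hfb]
  let F : V ≃ (Fin m ⊕ Fin n) :=
    (Equiv.sumCompl P).symm.trans (Equiv.sumCongr f₁ f₂)
  refine ⟨⟨F, ?_⟩⟩
  intro x y
  have hF : ∀ (z : V), F z = if h : P z then Sum.inl (f₁ ⟨z, h⟩) else Sum.inr (f₂ ⟨z, h⟩) := by
    intro z
    by_cases h : P z <;>
      simp [F, Equiv.sumCompl_symm_apply_of_pos, Equiv.sumCompl_symm_apply_of_neg, h]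
  show (completeBridgeGraph m n).Adj (F x) (F y) ↔ Γ.Adj x y
  rw [hF x, hF y, hAdj]
  by_cases hx : P x <;> by_cases hy : P y
  · rw [dif_pos hx, dif_pos hy]
    show f₁ ⟨x, hx⟩ ≠ f₁ ⟨y, hy⟩ ↔ _
    constructor
    · intro h
      have hne : x ≠ y := by
        rintro rfl; exact h (by rfl)
      exact Or.inl ⟨hne, Or.inl ⟨hx, hy⟩⟩
    · rintro (⟨hne, _⟩ | ⟨rfl, rfl⟩ | ⟨rfl, rfl⟩)
      · intro hcon
        have := f₁.injective hcon
        exact hne (by simpa [Subtype.ext_iff] using this)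
      · exact absurd hy hb
      · exact absurd hx hb
  · rw [dif_pos hx, dif_neg hy]
    show ((f₁ ⟨x, hx⟩ : Fin m).val = 0 ∧ (f₂ ⟨y, hy⟩ : Fin n).val = 0) ↔ _
    rw [show ((f₁ ⟨x, hx⟩ : Fin m).val = 0 ∧ (f₂ ⟨y, hy⟩ : Fin n).val = 0) ↔ (x = a ∧ y = b) from
      and_congr (key₁ x hx) (key₂ y hy)]
    constructor
    · exact fun h => Or.inr (Or.inl h)
    · rintro (⟨hne, (⟨_, h⟩ | ⟨h, _⟩)⟩ | h | ⟨rfl, rfl⟩)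
      · exact absurd h hy
      · exact absurd hx h
      · exact h
      · exact absurd ha hy
  · rw [dif_neg hx, dif_pos hy]
    show ((f₂ ⟨x, hx⟩ : Fin n).val = 0 ∧ (f₁ ⟨y, hy⟩ : Fin m).val = 0) ↔ _
    rw [show ((f₂ ⟨x, hx⟩ : Fin n).val = 0 ∧ (f₁ ⟨y, hy⟩ : Fin m).val = 0) ↔ (x = b ∧ y = a) from
      and_congr (key₂ x hx) (key₁ y hy)]
    constructor
    · exact fun h => Or.inr (Or.inr h)
    · rintro (⟨hne, (⟨h, _⟩ | ⟨_, h⟩)⟩ | ⟨rfl, rfl⟩ | h)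
      · exact absurd h hx
      · exact absurd hy h
      · exact absurd ha hx
      · exact h
  · rw [dif_neg hx, dif_neg hy]
    show f₂ ⟨x, hx⟩ ≠ f₂ ⟨y, hy⟩ ↔ _
    constructor
    · intro h
      have hne : x ≠ y := by
        rintro rfl; exact h (by rfl)
      exact Or.inl ⟨hne, Or.inr ⟨hx, hy⟩⟩
    · rintro (⟨hne, _⟩ | ⟨rfl, rfl⟩ | ⟨rfl, rfl⟩)
      · intro hcon
        have := f₂.injective hcon
        exact hne (by simpa [Subtype.ext_iff] using this)
      · exact absurd ha hx
      · exact absurd ha hy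

lemma pendant_lemma {V : Type} [Fintype V] (Γ : SimpleGraph V) (hΓ : IsMCPG Γ)
    (p q : V) (hadj : Γ.Adj p q)
    (hcl : ∀ x y, x ≠ p → y ≠ p → x ≠ y → Γ.Adj x y)
    (hpend : ∀ x, Γ.Adj p x → x = q) :
    ∃ m n : ℕ, n ≤ m ∧ (1 < n ∨ ((m = 1 ∨ m = 2) ∧ n = 1)) ∧
      Nonempty (Γ ≃g completeBridgeGraph m n) := by
  classical
  obtain ⟨hcard, hconn, hcf, hcol, hmin⟩ := hΓ
  have hpq : p ≠ q := hadj.ne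
  have hqp : q ≠ p := hpq.symm
  -- adjacency characterization
  have hAdj : ∀ x y, Γ.Adj x y ↔ ((x ≠ y ∧ ((x ≠ p ∧ y ≠ p) ∨ (¬(x ≠ p) ∧ ¬(y ≠ p)))) ∨
      (x = q ∧ y = p) ∨ (x = p ∧ y = q)) := by
    intro x y
    constructor
    · intro h
      by_cases hx : x = p
      · subst hx
        exact Or.inr (Or.inr ⟨rfl, hpend y h⟩)
      · by_cases hy : y = p
        · subst hy
          exact Or.inr (Or.inl ⟨hpend x h.symm, rfl⟩)
        · exact Or.inl ⟨h.ne, Or.inl ⟨hx, hy⟩⟩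
    · rintro (⟨hne, (⟨hx, hy⟩ | ⟨hx, hy⟩)⟩ | ⟨rfl, rfl⟩ | ⟨rfl, rfl⟩)
      · exact hcl x y hx hy hne
      · rw [not_not] at hx hy
        exact absurd (hx.trans hy.symm) hne
      · exact hadj.symm
      · exact hadj
  set m := Fintype.card {x // x ≠ p} with hm
  have hm1 : 1 ≤ m := Fintype.card_pos_iff.mpr ⟨⟨q, hqp⟩⟩
  have hm2 : m ≤ 2 := by
    by_contra hcon
    push_neg at hcon
    obtain ⟨x, y, z, hxy, hxz, hyz⟩ := Fintype.two_lt_card_iff.mp hcon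
    -- find two distinct elements of the clique different from q
    obtain ⟨y0, z0, hy0p, hz0p, hy0q, hz0q, hy0z0⟩ :
        ∃ y0 z0 : V, y0 ≠ p ∧ z0 ≠ p ∧ y0 ≠ q ∧ z0 ≠ q ∧ y0 ≠ z0 := by
      by_cases h1 : (x : V) = q
      · refine ⟨y, z, y.2, z.2, ?_, ?_, ?_⟩
        · rintro rfl; exact hxy (Subtype.ext h1)
        · rintro rfl; exact hxz (Subtype.ext h1)
        · exact fun h => hyz (Subtype.ext h)
      · by_cases h2 : (y : V) = q
        · refine ⟨x, z, x.2, z.2, h1, ?_, ?_⟩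
          · rintro rfl; exact hyz (Subtype.ext h2)
          · exact fun h => hxz (Subtype.ext h)
        · exact ⟨x, y, x.2, y.2, h1, h2, fun h => hxy (Subtype.ext h)⟩
    have hqy0 : Γ.Adj q y0 := hcl q y0 hqp hy0p (Ne.symm hy0q)
    set Γ' := Γ.deleteEdges {s(q, y0)} with hΓ'
    have hed : ∀ u v : V, Γ.Adj u v → ¬(s(u,v) = s(q,y0)) → Γ'.Adj u v := by
      intro u v h1 h2
      rw [hΓ', deleteEdges_adj]
      exact ⟨h1, by simpa using h2⟩
    -- connectivity
    have hreach : ∀ w, Γ'.Reachable q w := by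
      intro w
      by_cases hw1 : w = q
      · subst hw1; rfl
      · by_cases hw2 : w = y0
        · rw [hw2]
          have e1 : Γ'.Adj q z0 := by
            refine hed _ _ (hcl q z0 hqp hz0p (Ne.symm hz0q)) ?_
            rw [Sym2.eq_iff]
            rintro (⟨-, h⟩ | ⟨h, -⟩)
            · exact hy0z0 h.symm
            · exact hy0q h.symm
          have e2 : Γ'.Adj z0 y0 := by
            refine hed _ _ (hcl z0 y0 hz0p hy0p hy0z0.symm) ?_
            rw [Sym2.eq_iff]
            rintro (⟨h, -⟩ | ⟨-, h⟩)
            · exact hz0q h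
            · exact hy0q h
          exact e1.reachable.trans e2.reachable
        · by_cases hw3 : w = p
          · rw [hw3]
            refine (hed _ _ hadj.symm ?_).reachable
            rw [Sym2.eq_iff]
            rintro (⟨-, h⟩ | ⟨h, -⟩)
            · exact hy0p h.symm
            · exact hy0q h.symm
          · refine (hed _ _ (hcl q w hqp hw3 (Ne.symm hw1)) ?_).reachable
            rw [Sym2.eq_iff]
            rintro (⟨-, h⟩ | ⟨h, -⟩)
            · exact hw2 h
            · exact hy0q h.symm
    have hconn' : Γ'.Connected := by
      rw [connected_iff]
      exact ⟨fun u v => (hreach u).symm.trans (hreach v), hconn.nonempty⟩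
    -- structure of complement edges
    have hstruct : ∀ u v, (Γ'ᶜ).Adj u v →
        (u = p ∧ v ≠ q ∧ v ≠ p) ∨ (v = p ∧ u ≠ q ∧ u ≠ p) ∨ (u = q ∧ v = y0) ∨ (u = y0 ∧ v = q) := by
      intro u v huv
      rw [compl_adj] at huv
      obtain ⟨hne, hnadj⟩ := huv
      rw [hΓ', deleteEdges_adj] at hnadj
      push_neg at hnadj
      by_cases hA : Γ.Adj u v
      · have := hnadj hA
        rw [Set.mem_singleton_iff, Sym2.eq_iff] at this
        rcases this with ⟨rfl, rfl⟩ | ⟨rfl, rfl⟩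
        · exact Or.inr (Or.inr (Or.inl ⟨rfl, rfl⟩))
        · exact Or.inr (Or.inr (Or.inr ⟨rfl, rfl⟩))
      · by_cases hu : u = p
        · subst hu
          have hvq : v ≠ q := by rintro rfl; exact hA hadj
          exact Or.inl ⟨rfl, hvq, hne.symm⟩
        · by_cases hv : v = p
          · subst hv
            have huq : u ≠ q := by rintro rfl; exact hA hadj.symm
            exact Or.inr (Or.inl ⟨rfl, huq, hne⟩)
          · exact absurd (hcl u v hu hv hne) hA
    have hcf' : (Γ'ᶜ).CliqueFree 3 := by
      intro t ht
      rw [is3Clique_iff] at ht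
      obtain ⟨u, v, w, huv, huw, hvw, rfl⟩ := ht
      have h1 := hstruct u v huv
      have h2 := hstruct u w huw
      have h3 := hstruct v w hvw
      have n1 : u ≠ v := huv.ne
      have n2 : u ≠ w := huw.ne
      have n3 : v ≠ w := hvw.ne
      clear * - n1 n2 n3 h1 h2 h3 hpq hy0q hy0p
      rcases h1 with (⟨e1, e2, e3⟩|⟨e1, e2, e3⟩|⟨e1, e2⟩|⟨e1, e2⟩) <;>
        rcases h2 with (⟨f1, f2, f3⟩|⟨f1, f2, f3⟩|⟨f1, f2⟩|⟨f1, f2⟩) <;>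
        rcases h3 with (⟨g1, g2, g3⟩|⟨g1, g2, g3⟩|⟨g1, g2⟩|⟨g1, g2⟩) <;>
        simp_all
    have hcol' : (Γ'ᶜ).Colorable 3 := by
      refine ⟨Coloring.mk (fun v => if v = p ∨ v = q then (0 : Fin 3) else 1) ?_⟩
      intro u v huv
      rcases hstruct u v huv with (⟨e1, e2, e3⟩|⟨e1, e2, e3⟩|⟨e1, e2⟩|⟨e1, e2⟩)
      · simp [e1, e2, e3]
      · simp [e1, e2, e3]
      · simp [e1, e2, hy0p, hy0q]
      · simp [e1, e2, hy0p, hy0q, hqp]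
    exact hmin s(q, y0) ((mem_edgeSet Γ).mpr hqy0) ⟨hconn', hcf', hcol'⟩
  have e₂ : {x // ¬ x ≠ p} ≃ Fin 1 :=
    { toFun := fun _ => 0
      invFun := fun _ => ⟨p, not_not_intro rfl⟩
      left_inv := fun z => Subtype.ext (by simpa using (not_not.mp z.2).symm)
      right_inv := fun i => Subsingleton.elim _ _ }
  refine ⟨m, 1, hm1, Or.inr ⟨by omega, rfl⟩,
    iso_lemma Γ (fun x => x ≠ p) q p hqp (not_not_intro rfl) hAdj m 1
      (Fintype.equivFin _) e₂⟩

/-- If `Γ` is a minimally connected prime graph that is not a minimal prime graph, then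
`Γ` is isomorphic to a complete bridge graph `B_{m,n}` for some `m ≥ n` with either
`m ≥ n > 1`, or `m ∈ {1,2}` and `n = 1`. -/
theorem stmt1 {V : Type} [Fintype V] (Γ : SimpleGraph V)
    (hΓ : IsMCPG Γ) (hnot : ¬ IsMPG Γ) :
    ∃ m n : ℕ, n ≤ m ∧ (1 < n ∨ ((m = 1 ∨ m = 2) ∧ n = 1)) ∧
      Nonempty (Γ ≃g completeBridgeGraph m n) := by
  classical
  obtain ⟨hcard, hconn, hcf, hcol, hmin⟩ := hΓ
  have hex : ∃ e ∈ Γ.edgeSet,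
      (Γ.deleteEdges {e})ᶜ.CliqueFree 3 ∧ (Γ.deleteEdges {e})ᶜ.Colorable 3 := by
    by_contra h
    push_neg at h
    exact hnot ⟨hcard, hconn, hcf, hcol, fun e he hc => (h e he hc.1) hc.2⟩
  obtain ⟨e, he, hprop⟩ := hex
  revert he hprop
  induction e using Sym2.ind with
  | _ a b =>
  intro he hprop
  obtain ⟨hcf', hcol'⟩ := hprop
  have hab : Γ.Adj a b := (mem_edgeSet Γ).mp he
  set Γ' := Γ.deleteEdges {s(a, b)} with hΓ'
  have hdis : ¬ Γ'.Connected := fun hc => hmin _ he ⟨hc, hcf', hcol'⟩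
  set P : V → Prop := fun x => Γ'.Reachable a x with hP
  have hPa : P a := Reachable.refl a
  have hPb : ¬ P b := by
    intro hb
    apply hdis
    rw [connected_iff]
    have walkconv : ∀ u v : V, Γ.Walk u v → Γ'.Reachable u v := by
      intro u v w
      induction w with
      | nil => rfl
      | @cons x y z hh p ih =>
        by_cases hc : s(x, y) = s(a, b)
        · rcases Sym2.eq_iff.mp hc with ⟨rfl, rfl⟩ | ⟨rfl, rfl⟩
          · exact hb.trans ih
          · exact hb.symm.trans ih
        · refine (Adj.reachable ?_).trans ih
          rw [hΓ', deleteEdges_adj]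
          exact ⟨hh, by simpa using hc⟩
    refine ⟨fun u v => ?_, hconn.nonempty⟩
    exact (hconn.preconnected u v).elim fun w => walkconv u v w
  have hcross : ∀ x y, P x → ¬ P y → Γ.Adj x y → x = a ∧ y = b := by
    intro x y hx hy hxy
    by_cases hc : s(x, y) = s(a, b)
    · rcases Sym2.eq_iff.mp hc with ⟨rfl, rfl⟩ | ⟨rfl, rfl⟩
      · exact ⟨rfl, rfl⟩
      · exact absurd hPa hy
    · exfalso
      refine hy (hx.trans (Adj.reachable ?_))
      rw [hΓ', deleteEdges_adj]
      exact ⟨hxy, by simpa using hc⟩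
  by_cases hB2 : ∃ y, ¬ P y ∧ y ≠ b
  · by_cases hA2 : ∃ x, P x ∧ x ≠ a
    · -- both sides have at least 2 vertices
      obtain ⟨y0, hy0, hy0b⟩ := hB2
      obtain ⟨x0, hx0, hx0a⟩ := hA2
      have hAcl : ∀ x y, P x → P y → x ≠ y → Γ.Adj x y := by
        intro x y hx hy hne
        by_contra hnadj
        refine hcf {x, y, y0} ?_
        rw [is3Clique_triple_iff]
        refine ⟨⟨hne, hnadj⟩, ⟨?_, ?_⟩, ?_, ?_⟩
        · rintro rfl; exact hy0 hx
        · intro h; exact hy0b (hcross x y0 hx hy0 h).2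
        · rintro rfl; exact hy0 hy
        · intro h; exact hy0b (hcross y y0 hy hy0 h).2
      have hBcl : ∀ x y, ¬ P x → ¬ P y → x ≠ y → Γ.Adj x y := by
        intro x y hx hy hne
        by_contra hnadj
        refine hcf {x, y, x0} ?_
        rw [is3Clique_triple_iff]
        refine ⟨⟨hne, hnadj⟩, ⟨?_, ?_⟩, ?_, ?_⟩
        · rintro rfl; exact hx hx0
        · intro h; exact hx0a (hcross x0 x hx0 hx h.symm).1
        · rintro rfl; exact hy hx0
        · intro h; exact hx0a (hcross x0 y hx0 hy h.symm).1
      have hAdj : ∀ x y, Γ.Adj x y ↔ ((x ≠ y ∧ ((P x ∧ P y) ∨ (¬P x ∧ ¬P y))) ∨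
          (x = a ∧ y = b) ∨ (x = b ∧ y = a)) := by
        intro x y
        constructor
        · intro h
          by_cases hx : P x <;> by_cases hy : P y
          · exact Or.inl ⟨h.ne, Or.inl ⟨hx, hy⟩⟩
          · exact Or.inr (Or.inl (hcross x y hx hy h))
          · obtain ⟨h1, h2⟩ := hcross y x hy hx h.symm
            exact Or.inr (Or.inr ⟨h2, h1⟩)
          · exact Or.inl ⟨h.ne, Or.inr ⟨hx, hy⟩⟩
        · rintro (⟨hne, (⟨hx, hy⟩ | ⟨hx, hy⟩)⟩ | ⟨rfl, rfl⟩ | ⟨rfl, rfl⟩)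
          · exact hAcl x y hx hy hne
          · exact hBcl x y hx hy hne
          · exact hab
          · exact hab.symm
      have hm2 : 1 < Fintype.card {x // P x} :=
        Fintype.one_lt_card_iff.mpr ⟨⟨a, hPa⟩, ⟨x0, hx0⟩, by
          intro h; exact hx0a (by simpa [Subtype.ext_iff, eq_comm] using h)⟩
      have hn2 : 1 < Fintype.card {x // ¬ P x} :=
        Fintype.one_lt_card_iff.mpr ⟨⟨b, hPb⟩, ⟨y0, hy0⟩, by
          intro h; exact hy0b (by simpa [Subtype.ext_iff, eq_comm] using h)⟩
      by_cases hle : Fintype.card {x // ¬ P x} ≤ Fintype.card {x // P x}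
      · exact ⟨_, _, hle, Or.inl hn2,
          iso_lemma Γ P a b hPa hPb hAdj _ _ (Fintype.equivFin _) (Fintype.equivFin _)⟩
      · push_neg at hle
        have hAdj' : ∀ x y, Γ.Adj x y ↔ ((x ≠ y ∧ ((¬P x ∧ ¬P y) ∨ (¬¬P x ∧ ¬¬P y))) ∨
            (x = b ∧ y = a) ∨ (x = a ∧ y = b)) := by
          intro x y
          rw [hAdj x y]
          tauto
        have e₂ : {x // ¬ ¬ P x} ≃ Fin (Fintype.card {x // P x}) :=
          (Equiv.subtypeEquivRight fun x => not_not).trans (Fintype.equivFin _)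
        exact ⟨_, _, le_of_lt hle, Or.inl hm2,
          iso_lemma Γ (fun x => ¬ P x) b a hPb (not_not_intro hPa) hAdj' _ _
            (Fintype.equivFin _) e₂⟩
    · -- A = {a} : a is the pendant vertex
      push_neg at hA2
      have hBcl : ∀ x y, x ≠ a → y ≠ a → x ≠ y → Γ.Adj x y := by
        intro x y hx hy hne
        have hx' : ¬ P x := fun h => hx (hA2 x h)
        have hy' : ¬ P y := fun h => hy (hA2 y h)
        by_contra hnadj
        refine hcf' {x, y, a} ?_
        rw [is3Clique_triple_iff]
        have haux : ∀ z, ¬ P z → (Γ'ᶜ).Adj z a := by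
          intro z hz
          rw [compl_adj]
          refine ⟨fun h => hz (h ▸ hPa), fun h => ?_⟩
          rw [hΓ', deleteEdges_adj] at h
          obtain ⟨h1, h2⟩ := h
          obtain ⟨-, rfl⟩ := hcross a z hPa hz h1.symm
          exact h2 (by simp [Sym2.eq_swap])
        refine ⟨⟨hne, fun h => hnadj ?_⟩, haux x hx', haux y hy'⟩
        rw [hΓ', deleteEdges_adj] at h
        exact h.1
      refine pendant_lemma Γ ⟨hcard, hconn, hcf, hcol, hmin⟩ a b hab hBcl ?_
      intro x h
      by_cases hx : P x
      · exact absurd (hA2 x hx) (fun hc => (hc ▸ h).ne rfl)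
      · exact (hcross a x hPa hx h).2
  · -- B = {b} : b is the pendant vertex
    push_neg at hB2
    have hAcl : ∀ x y, x ≠ b → y ≠ b → x ≠ y → Γ.Adj x y := by
      intro x y hx hy hne
      have hx' : P x := by
        by_contra h; exact hx (hB2 x h)
      have hy' : P y := by
        by_contra h; exact hy (hB2 y h)
      by_contra hnadj
      refine hcf' {x, y, b} ?_
      rw [is3Clique_triple_iff]
      have haux : ∀ z, P z → (Γ'ᶜ).Adj z b := by
        intro z hz
        rw [compl_adj]
        refine ⟨fun h => hPb (h ▸ hz), fun h => ?_⟩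
        rw [hΓ', deleteEdges_adj] at h
        obtain ⟨h1, h2⟩ := h
        obtain ⟨rfl, -⟩ := hcross z b hz hPb h1
        exact h2 rfl
      refine ⟨⟨hne, fun h => hnadj ?_⟩, haux x hx', haux y hy'⟩
      rw [hΓ', deleteEdges_adj] at h
      exact h.1
    refine pendant_lemma Γ ⟨hcard, hconn, hcf, hcol, hmin⟩ b a hab.symm hAcl ?_
    intro x h
    by_cases hx : P x
    · exact (hcross x b hx hPb h.symm).1
    · exact absurd (hB2 x hx) (fun hc => (hc ▸ h).ne rfl)
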